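/- Let L ≥ 3. Let 𝔡_OBC be the Lie algebra over ℝ generated by {i·Z_j : 1 ≤ j ≤ L} ∪ {i·X_j·X_{j+1} : 1 ≤ j ≤ L−1}, and let 𝔡_PBC be the Lie algebra over ℝ generated by {i·Z_j : 1 ≤ j ≤ L} ∪ {i·X_j·X_{j+1} : 1 ≤ j ≤ L−1} ∪ {i·X_L·X_1}, both inside the 2^L × 2^L complex matrices. Fix a sign s ∈ {+1, −1} and let Π = (Id + s·P)/2 be the projector onto the parity sector P = s. Then the compressed sets {Π·H·Π : H ∈ 𝔡_OBC} and {Π·H·Π : H ∈ 𝔡_PBC} are equal, and this set is a real vector space of dimension L·(2L−1). -/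

import Mathlib

open Matrix

attribute [local instance 100] LieRing.ofAssociativeRing

noncomputable section

/-- The Pauli matrix X. -/
def PX : Matrix (Fin 2) (Fin 2) ℂ := !![0, 1; 1, 0]
/-- The Pauli matrix Y. -/
def PY : Matrix (Fin 2) (Fin 2) ℂ := !![0, -Complex.I; Complex.I, 0]
/-- The Pauli matrix Z. -/
def PZ : Matrix (Fin 2) (Fin 2) ℂ := !![1, 0; 0, -1]

/-- The operator `M_j = I₂^{⊗ j} ⊗ M ⊗ I₂^{⊗ (L-1-j)}` acting as `M` on site `j` and as the
identity elsewhere, on `(ℂ²)^{⊗ L} ≅ ℂ^{2^L}` whose standard basis is indexed by functions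
`v : Fin L → Fin 2`. -/
def site (L : ℕ) (M : Matrix (Fin 2) (Fin 2) ℂ) (j : Fin L) :
    Matrix (Fin L → Fin 2) (Fin L → Fin 2) ℂ :=
  fun v w => ∏ k : Fin L, if k = j then M (v k) (w k) else (if v k = w k then 1 else 0)

/-- The Pauli string `T^{AB}_{j,k} = A_j · Z_{j+1} · Z_{j+2} ⋯ Z_{k-1} · B_k`. -/
def pauliString (L : ℕ) (A B : Matrix (Fin 2) (Fin 2) ℂ) (j k : Fin L) :
    Matrix (Fin L → Fin 2) (Fin L → Fin 2) ℂ :=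
  site L A j *
    (((List.finRange L).filter (fun m => j < m ∧ m < k)).map (site L PZ)).prod *
    site L B k

/-- The parity operator `P = Z_1 · Z_2 ⋯ Z_L`. -/
def parity (L : ℕ) : Matrix (Fin L → Fin 2) (Fin L → Fin 2) ℂ :=
  ((List.finRange L).map (site L PZ)).prod

/-- The generators of the site-dependent protocol with open boundary conditions:
`{i·Z_j : 1 ≤ j ≤ L} ∪ {i·X_j·X_{j+1} : 1 ≤ j ≤ L-1}`. -/
def depGenOBC (L : ℕ) : Set (Matrix (Fin L → Fin 2) (Fin L → Fin 2) ℂ) :=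
  {M | ∃ j : Fin L, M = Complex.I • site L PZ j} ∪
  {M | ∃ (j : ℕ) (h : j + 1 < L),
    M = Complex.I • (site L PX ⟨j, by omega⟩ * site L PX ⟨j + 1, h⟩)}

/-- The generators of the site-dependent protocol with periodic boundary conditions:
the OBC generators together with `i·X_L·X_1`. -/
def depGenPBC (L : ℕ) (hL : 0 < L) : Set (Matrix (Fin L → Fin 2) (Fin L → Fin 2) ℂ) :=
  depGenOBC L ∪
    {Complex.I • (site L PX ⟨L - 1, by omega⟩ * site L PX ⟨0, hL⟩)}

/-- The projector `Π = (Id + s·P)/2` onto the parity sector `P = s`. -/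
def paritySector (L : ℕ) (s : ℂ) : Matrix (Fin L → Fin 2) (Fin L → Fin 2) ℂ :=
  (2 : ℂ)⁻¹ • ((1 : Matrix (Fin L → Fin 2) (Fin L → Fin 2) ℂ) + s • parity L)

namespace DLAux

/-! ### Generalized Pauli matrices -/

/-- sign character on `Fin 2`. -/
def eps : Fin 2 → ℂ := fun x => if x = 0 then 1 else -1

lemma eps_add (x y : Fin 2) : eps (x + y) = eps x * eps y := by
  fin_cases x <;> fin_cases y <;> simp [eps]

lemma eps_sum {ι : Type*} (s : Finset ι) (f : ι → Fin 2) :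
    eps (∑ i ∈ s, f i) = ∏ i ∈ s, eps (f i) := by
  classical
  induction s using Finset.cons_induction with
  | empty => simp [eps]
  | cons a s ha ih => rw [Finset.sum_cons, Finset.prod_cons, eps_add, ih]

lemma fin2_add_self : ∀ x : Fin 2, x + x = 0 := by decide
lemma fin2_add_eq_zero : ∀ x y : Fin 2, x + y = 0 → x = y := by decide
lemma fin2_val_add : ∀ x y : Fin 2, (x + y).val = (x.val + y.val) % 2 := by decide
lemma fin2_val_ite (c : Prop) [Decidable c] :
    (if c then (1 : Fin 2) else 0).val = if c then 1 else 0 := by split_ifs <;> rfl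

variable {L : ℕ}

/-- parity character -/
def chi (b w : Fin L → Fin 2) : ℂ := ∏ k, eps (b k * w k)

/-- mod-2 dot product -/
def dd (a b : Fin L → Fin 2) : Fin 2 := ∑ k, a k * b k

lemma chi_eq_eps_dd (b a : Fin L → Fin 2) : chi b a = eps (dd a b) := by
  rw [dd, eps_sum]
  exact Finset.prod_congr rfl fun k _ => by rw [mul_comm]

lemma chi_add_left (b b' w : Fin L → Fin 2) : chi (b + b') w = chi b w * chi b' w := by
  rw [chi, chi, chi, ← Finset.prod_mul_distrib]
  exact Finset.prod_congr rfl fun k _ => by rw [Pi.add_apply, add_mul, eps_add]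

lemma chi_add_right (b w w' : Fin L → Fin 2) : chi b (w + w') = chi b w * chi b w' := by
  rw [chi, chi, chi, ← Finset.prod_mul_distrib]
  exact Finset.prod_congr rfl fun k _ => by rw [Pi.add_apply, mul_add, eps_add]

lemma chi_zero_left (w : Fin L → Fin 2) : chi (0 : Fin L → Fin 2) w = 1 := by
  simp [chi, eps]

lemma chi_zero_right (b : Fin L → Fin 2) : chi b (0 : Fin L → Fin 2) = 1 := by
  simp [chi, eps]

lemma dd_add_left (a a' b : Fin L → Fin 2) : dd (a + a') b = dd a b + dd a' b := by
  rw [dd, dd, dd, ← Finset.sum_add_distrib]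
  exact Finset.sum_congr rfl fun k _ => by rw [Pi.add_apply, add_mul]

lemma dd_add_right (a b b' : Fin L → Fin 2) : dd a (b + b') = dd a b + dd a b' := by
  rw [dd, dd, dd, ← Finset.sum_add_distrib]
  exact Finset.sum_congr rfl fun k _ => by rw [Pi.add_apply, mul_add]

lemma dd_zero_left (b : Fin L → Fin 2) : dd (0 : Fin L → Fin 2) b = 0 := by simp [dd]

lemma dd_zero_right (a : Fin L → Fin 2) : dd a (0 : Fin L → Fin 2) = 0 := by simp [dd]

/-- generalized Pauli string matrix -/
def PM (a b : Fin L → Fin 2) : Matrix (Fin L → Fin 2) (Fin L → Fin 2) ℂ :=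
  fun v w => if v = w + a then chi b w else 0

lemma PM_one : (PM (0 : Fin L → Fin 2) 0) = 1 := by
  ext v w
  simp only [PM, add_zero, chi_zero_left, Matrix.one_apply]

lemma PM_mul (a b a' b' : Fin L → Fin 2) :
    PM a b * PM a' b' = chi b a' • PM (a + a') (b + b') := by
  ext v w
  rw [Matrix.mul_apply, Finset.sum_eq_single (w + a')]
  · simp only [PM, Matrix.smul_apply, smul_eq_mul]
    have h1 : w + a' + a = w + (a + a') := by
      rw [add_assoc, add_comm a' a]
    rw [h1]
    by_cases h : v = w + (a + a') <;>
      simp [h, chi_add_right, chi_add_left] <;> ring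
  · intro u _ hu
    simp only [PM]
    rw [if_neg hu, mul_zero]
  · intro h
    exact absurd (Finset.mem_univ _) h

lemma sum_chi_eq_zero {b : Fin L → Fin 2} (hb : b ≠ 0) :
    ∑ w : Fin L → Fin 2, chi b w = 0 := by
  classical
  have h1 : ∑ w : Fin L → Fin 2, chi b w
      = ∑ w ∈ Fintype.piFinset (fun _ : Fin L => (Finset.univ : Finset (Fin 2))),
        ∏ k, eps (b k * w k) := by
    rw [Fintype.piFinset_univ]; rfl
  rw [h1, ← Finset.prod_univ_sum (fun _ : Fin L => (Finset.univ : Finset (Fin 2)))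
    (fun k x => eps (b k * x))]
  obtain ⟨k0, hk0⟩ : ∃ k0, b k0 ≠ 0 := by
    by_contra h; push_neg at h; exact hb (funext h)
  apply Finset.prod_eq_zero (Finset.mem_univ k0)
  have hb1 : b k0 = 1 := by omega
  rw [hb1, Fin.sum_univ_two]
  simp [eps]

lemma PM_linearIndependent (L : ℕ) :
    LinearIndependent ℂ (fun ab : (Fin L → Fin 2) × (Fin L → Fin 2) => PM ab.1 ab.2) := by
  classical
  rw [Fintype.linearIndependent_iff]
  intro g hg ab
  obtain ⟨a, b⟩ := ab
  have key : ∀ w : Fin L → Fin 2, ∑ b' : Fin L → Fin 2, g (a, b') * chi b' w = 0 := by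
    intro w
    have h0 := congrFun (congrFun hg (w + a)) w
    simp only [Matrix.sum_apply, Matrix.smul_apply, PM, smul_eq_mul, Matrix.zero_apply] at h0
    rw [Fintype.sum_prod_type] at h0
    simp only [add_right_inj, mul_ite, mul_zero] at h0
    rw [Finset.sum_comm] at h0
    simp only [Finset.sum_ite_eq, Finset.mem_univ, if_true] at h0
    exact h0
  have key2 : ∑ b' : Fin L → Fin 2,
      ∑ w : Fin L → Fin 2, g (a, b') * chi b' w * chi b w = 0 := by
    rw [Finset.sum_comm]
    have : ∀ w, ∑ b' : Fin L → Fin 2, g (a, b') * chi b' w * chi b w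
        = (∑ b' : Fin L → Fin 2, g (a, b') * chi b' w) * chi b w := by
      intro w; rw [Finset.sum_mul]
    simp only [this, key, zero_mul, Finset.sum_const_zero]
  have key3 : ∀ b' : Fin L → Fin 2,
      ∑ w : Fin L → Fin 2, g (a, b') * chi b' w * chi b w
        = g (a, b') * (if b' = b then (2 ^ L : ℂ) else 0) := by
    intro b'
    have hc : ∀ w, g (a, b') * chi b' w * chi b w = g (a, b') * chi (b' + b) w := by
      intro w; rw [chi_add_left, mul_assoc]
    rw [Finset.sum_congr rfl fun w _ => hc w, ← Finset.mul_sum]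
    by_cases hbb : b' = b
    · rw [if_pos hbb]
      congr 1
      have hz : b' + b = 0 := by
        rw [hbb]; funext k
        exact fin2_add_self (b k)
      rw [hz]
      simp only [chi_zero_left, Finset.sum_const, Finset.card_univ, nsmul_eq_mul, mul_one]
      rw [Fintype.card_fun]
      push_cast
      simp
    · rw [if_neg hbb, sum_chi_eq_zero, mul_zero]
      intro h
      apply hbb
      funext k
      exact fin2_add_eq_zero _ _ (congrFun h k)
  rw [Finset.sum_congr rfl fun b' _ => key3 b'] at key2
  simp only [mul_ite, mul_zero] at key2
  rw [Finset.sum_ite_eq' Finset.univ b (fun b' => g (a, b') * (2 ^ L : ℂ))] at key2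
  simp only [Finset.mem_univ, if_true] at key2
  have h2L : (2 ^ L : ℂ) ≠ 0 := by norm_num
  exact (mul_eq_zero.mp key2).resolve_right h2L

/-! ### Translation of `site` and `parity` -/

/-- delta function -/
def dlt (j : Fin L) : Fin L → Fin 2 := fun k => if k = j then 1 else 0

lemma PZ_apply : ∀ x y : Fin 2, PZ x y = if x = y then eps x else 0 := by
  intro x y
  fin_cases x <;> fin_cases y <;> simp [PZ, eps]

lemma PX_apply : ∀ x y : Fin 2, PX x y = if x = y + 1 then 1 else 0 := by
  intro x y
  fin_cases x <;> fin_cases y <;> simp [PX]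

lemma chi_dlt (j : Fin L) (w : Fin L → Fin 2) : chi (dlt j) w = eps (w j) := by
  rw [chi, Finset.prod_eq_single j]
  · simp [dlt]
  · intro k _ hk
    simp [dlt, hk]
    rfl
  · intro h; exact absurd (Finset.mem_univ _) h

lemma site_PZ (j : Fin L) : site L PZ j = PM 0 (dlt j) := by
  ext v w
  simp only [site, PM, add_zero]
  by_cases hvw : v = w
  · subst hvw
    rw [if_pos rfl, chi_dlt, Finset.prod_eq_single j]
    · simp [PZ_apply]
    · intro k _ hk
      simp [hk]
    · intro h; exact absurd (Finset.mem_univ _) h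
  · rw [if_neg hvw]
    obtain ⟨k0, hk0⟩ : ∃ k0, v k0 ≠ w k0 := by
      by_contra h; push_neg at h; exact hvw (funext h)
    apply Finset.prod_eq_zero (Finset.mem_univ k0)
    by_cases hkj : k0 = j
    · rw [if_pos hkj, PZ_apply, if_neg hk0]
    · rw [if_neg hkj, if_neg hk0]

lemma site_PX (j : Fin L) : site L PX j = PM (dlt j) 0 := by
  ext v w
  simp only [site, PM, chi_zero_left]
  by_cases hc : v = w + dlt j
  · rw [if_pos hc]
    apply Finset.prod_eq_one
    intro k _
    by_cases hkj : k = j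
    · subst hkj
      rw [if_pos rfl, PX_apply, if_pos]
      rw [hc]
      simp [dlt]
    · rw [if_neg hkj, if_pos]
      rw [hc]
      simp [dlt, hkj]
  · rw [if_neg hc]
    obtain ⟨k0, hk0⟩ : ∃ k0, v k0 ≠ w k0 + dlt j k0 := by
      by_contra h; push_neg at h
      exact hc (funext fun k => by rw [h k]; rfl)
    apply Finset.prod_eq_zero (Finset.mem_univ k0)
    by_cases hkj : k0 = j
    · subst hkj
      rw [if_pos rfl, PX_apply, if_neg]
      simpa [dlt] using hk0
    · rw [if_neg hkj]
      rw [if_neg]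
      intro h
      apply hk0
      rw [h]
      simp [dlt, hkj]

open Fin.NatCast in
lemma prod_site_PZ (l : List (Fin L)) :
    (l.map (site L PZ)).prod = PM 0 (fun k => ((l.count k : ℕ) : Fin 2)) := by
  induction l with
  | nil =>
    rw [List.map_nil, List.prod_nil]
    rw [show (fun k : Fin L => ((([] : List (Fin L)).count k : ℕ) : Fin 2)) = 0 from
      funext fun k => by simp]
    exact PM_one.symm
  | cons x l ih =>
    rw [List.map_cons, List.prod_cons, ih, site_PZ, PM_mul, chi_zero_right, one_smul, zero_add]
    have hfun : (dlt x + fun k => ((l.count k : ℕ) : Fin 2))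
        = fun k : Fin L => ((((x :: l).count k : ℕ)) : Fin 2) := by
      funext k
      simp only [Pi.add_apply, dlt, List.count_cons]
      push_cast
      by_cases hkx : k = x
      · subst hkx
        rw [if_pos rfl]
        simp only [beq_self_eq_true, if_true]
        exact add_comm _ _
      · rw [if_neg hkx]
        have hbx : (x == k) = false := beq_eq_false_iff_ne.mpr (fun h => hkx h.symm)
        rw [hbx]
        simp
    rw [hfun]

open Fin.NatCast in
lemma parity_eq (L : ℕ) : parity L = PM (0 : Fin L → Fin 2) 1 := by
  rw [parity, prod_site_PZ]
  have hfun : (fun k : Fin L => (((List.finRange L).count k : ℕ) : Fin 2)) = 1 := by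
    funext k
    rw [List.count_eq_one_of_mem (List.nodup_finRange L) (List.mem_finRange k)]
    rfl
  rw [hfun]

/-! ### The anti-Hermitian basis elements -/

/-- basis elements of the dynamical Lie algebra -/
def th (a b : Fin L → Fin 2) : Matrix (Fin L → Fin 2) (Fin L → Fin 2) ℂ :=
  Complex.I ^ ((dd a b).val + 1) • PM a b

lemma th_mul_sub (a b a' b' : Fin L → Fin 2) :
    ⁅th a b, th a' b'⁆ =
      (Complex.I ^ ((dd a b).val + 1) * Complex.I ^ ((dd a' b').val + 1) *
        (eps (dd a' b) - eps (dd a b'))) • PM (a + a') (b + b') := by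
  rw [Ring.lie_def, th, th, Matrix.smul_mul, Matrix.mul_smul, Matrix.smul_mul,
    Matrix.mul_smul, PM_mul, PM_mul, smul_smul, smul_smul, smul_smul, smul_smul,
    add_comm a' a, add_comm b' b, chi_eq_eps_dd, chi_eq_eps_dd, ← sub_smul]
  congr 1
  ring

lemma th_bracket_zero (a b a' b' : Fin L → Fin 2) (h : dd a' b = dd a b') :
    ⁅th a b, th a' b'⁆ = 0 := by
  rw [th_mul_sub, h, sub_self, mul_zero, zero_smul]

/-- real sign -/
def epsR : Fin 2 → ℝ := fun x => if x = 0 then 1 else -1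

lemma th_scalar : ∀ x y z w : Fin 2,
    Complex.I ^ (x.val + 1) * Complex.I ^ (y.val + 1) * (eps w - eps z) =
      ((if z = w then (0 : ℝ) else (if x.val + y.val = 0 then 2 else -2) * epsR w) : ℝ) *
        Complex.I ^ (((x + y) + (z + w)).val + 1) := by
  intro x y z w
  fin_cases x <;> fin_cases y <;> fin_cases z <;> fin_cases w <;>
    norm_num [eps, epsR, pow_succ, Complex.I_sq, Complex.I_mul_I,
      show ((2 : Fin 2) : ℕ) = 0 from rfl, show ((3 : Fin 2) : ℕ) = 1 from rfl,
        show ((1 + 1 : Fin 2) : ℕ) = 0 from rfl, show ((1 + 1 + 1 : Fin 2) : ℕ) = 1 from rfl] <;> ring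

lemma th_bracket (a b a' b' : Fin L → Fin 2) :
    ∃ c : ℝ, ⁅th a b, th a' b'⁆ = c • th (a + a') (b + b') ∧
      (dd a' b ≠ dd a b' → c ≠ 0) := by
  refine ⟨(if dd a b' = dd a' b then (0 : ℝ)
    else (if (dd a b).val + (dd a' b').val = 0 then 2 else -2) * epsR (dd a' b)), ?_, ?_⟩
  · rw [th_mul_sub, th]
    have hd : dd (a + a') (b + b') = ((dd a b + dd a' b') + (dd a b' + dd a' b)) := by
      rw [dd_add_left, dd_add_right, dd_add_right]
      abel
    rw [hd, th_scalar (dd a b) (dd a' b') (dd a b') (dd a' b)]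
    rw [← smul_assoc]
    congr 1
  · intro hne
    rw [if_neg (fun h => hne h.symm)]
    have h1 : epsR (dd a' b) ≠ 0 := by
      unfold epsR; split_ifs <;> norm_num
    have h2 : (if (dd a b).val + (dd a' b').val = 0 then (2 : ℝ) else -2) ≠ 0 := by
      split_ifs <;> norm_num
    exact mul_ne_zero h2 h1

/-! ### Majorana labels -/

/-- the a-part of the `n`-th Majorana string -/
def av (n : Fin (2 * L)) : Fin L → Fin 2 := fun k => if (k : ℕ) = n.val / 2 then 1 else 0

/-- the b-part of the `n`-th Majorana string -/
def bv (n : Fin (2 * L)) : Fin L → Fin 2 := fun k => if 2 * (k : ℕ) < n.val then 1 else 0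

lemma av_apply (n : Fin (2 * L)) (k : Fin L) :
    av n k = if (k : ℕ) = n.val / 2 then 1 else 0 := rfl

lemma bv_apply (n : Fin (2 * L)) (k : Fin L) :
    bv n k = if 2 * (k : ℕ) < n.val then 1 else 0 := rfl

lemma dd_av (x : Fin (2 * L)) (b : Fin L → Fin 2) :
    dd (av x) b = b ⟨x.val / 2, by have := x.isLt; omega⟩ := by
  rw [dd, Finset.sum_eq_single (⟨x.val / 2, by have := x.isLt; omega⟩ : Fin L)]
  · simp [av]
  · intro k _ hk
    have : (k : ℕ) ≠ x.val / 2 := fun h => hk (Fin.ext h)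
    simp [av, this]
  · intro h; exact absurd (Finset.mem_univ _) h

lemma dd_cross (x y : Fin (2 * L)) :
    dd (av x) (bv y) = if 2 * (x.val / 2) < y.val then (1 : Fin 2) else 0 := by
  rw [dd_av]; rfl

lemma dd_av_one (x : Fin (2 * L)) : dd (av x) (1 : Fin L → Fin 2) = 1 := by
  rw [dd_av]; rfl

/-- the quadratic basis elements -/
def TH (L : ℕ) (m n : Fin (2 * L)) : Matrix (Fin L → Fin 2) (Fin L → Fin 2) ℂ :=
  th (av m + av n) (bv m + bv n)

lemma TH_symm (m n : Fin (2 * L)) : TH L m n = TH L n m := by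
  rw [TH, TH, add_comm (av m), add_comm (bv m)]

/-! ### Identification of generators -/

lemma genZ (j : Fin L) (h1 : 2 * j.val < 2 * L) (h2 : 2 * j.val + 1 < 2 * L) :
    TH L ⟨2 * j.val, h1⟩ ⟨2 * j.val + 1, h2⟩ = Complex.I • site L PZ j := by
  have ha : av (⟨2 * j.val, h1⟩ : Fin (2 * L)) + av ⟨2 * j.val + 1, h2⟩ = 0 := by
    funext k
    simp only [Pi.add_apply, av_apply, Pi.zero_apply]
    split_ifs <;> first | rfl | omega
  have hb : bv (⟨2 * j.val, h1⟩ : Fin (2 * L)) + bv ⟨2 * j.val + 1, h2⟩ = dlt j := by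
    funext k
    simp only [Pi.add_apply, bv_apply, dlt, Fin.ext_iff]
    split_ifs <;> first | rfl | omega
  rw [TH, ha, hb, th, dd_zero_left, site_PZ]
  norm_num

lemma genXX (j : ℕ) (h : j + 1 < L) (h1 : 2 * j + 1 < 2 * L) (h2 : 2 * j + 2 < 2 * L) :
    TH L ⟨2 * j + 1, h1⟩ ⟨2 * j + 2, h2⟩
      = Complex.I • (site L PX ⟨j, by omega⟩ * site L PX ⟨j + 1, h⟩) := by
  have ha : av (⟨2 * j + 1, h1⟩ : Fin (2 * L)) + av ⟨2 * j + 2, h2⟩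
      = dlt ⟨j, by omega⟩ + dlt ⟨j + 1, h⟩ := by
    funext k
    simp only [Pi.add_apply, av_apply, dlt, Fin.ext_iff]
    split_ifs <;> first | rfl | omega
  have hb : bv (⟨2 * j + 1, h1⟩ : Fin (2 * L)) + bv ⟨2 * j + 2, h2⟩ = 0 := by
    funext k
    simp only [Pi.add_apply, bv_apply, Pi.zero_apply]
    split_ifs <;> first | rfl | omega
  rw [TH, ha, hb, th, dd_zero_right, site_PX, site_PX, PM_mul, chi_zero_left, one_smul, add_zero]
  norm_num

/-! ### index-cancellation helpers -/

lemma fin2_c1 : ∀ p q r : Fin 2, (p + q) + (q + r) = p + r := by decide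
lemma fin2_c2 : ∀ p q r : Fin 2, (p + q) + (p + r) = q + r := by decide
lemma fin2_c3 : ∀ p q r : Fin 2, (p + q) + (r + p) = r + q := by decide
lemma fin2_c4 : ∀ p q r : Fin 2, (p + q) + (r + q) = p + r := by decide

lemma Vc1 (f : Fin (2 * L) → Fin L → Fin 2) (m x n : Fin (2 * L)) :
    (f m + f x) + (f x + f n) = f m + f n := by
  funext k; simp only [Pi.add_apply]; exact fin2_c1 _ _ _

lemma Vc2 (f : Fin (2 * L) → Fin L → Fin 2) (m x n : Fin (2 * L)) :
    (f m + f x) + (f m + f n) = f x + f n := by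
  funext k; simp only [Pi.add_apply]; exact fin2_c2 _ _ _

lemma Vc3 (f : Fin (2 * L) → Fin L → Fin 2) (m x n : Fin (2 * L)) :
    (f m + f x) + (f n + f m) = f n + f x := by
  funext k; simp only [Pi.add_apply]; exact fin2_c3 _ _ _

lemma Vc4 (f : Fin (2 * L) → Fin L → Fin 2) (m x n : Fin (2 * L)) :
    (f m + f x) + (f n + f x) = f m + f n := by
  funext k; simp only [Pi.add_apply]; exact fin2_c4 _ _ _

lemma omega_ne (m x n : Fin (2 * L)) (h1 : m.val < x.val) (h2 : x.val < n.val) :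
    dd (av x + av n) (bv m + bv x) ≠ dd (av m + av x) (bv x + bv n) := by
  simp only [dd_add_left, dd_add_right, dd_cross]
  intro h
  have h' := congrArg Fin.val h
  simp only [fin2_val_add, fin2_val_ite] at h'
  have hx := x.isLt
  split_ifs at h' <;> omega

lemma omega_eq (m n r s : Fin (2 * L)) (hmr : m.val ≠ r.val) (hms : m.val ≠ s.val)
    (hnr : n.val ≠ r.val) (hns : n.val ≠ s.val) (hmn : m.val ≠ n.val) (hrs : r.val ≠ s.val) :
    dd (av r + av s) (bv m + bv n) = dd (av m + av n) (bv r + bv s) := by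
  simp only [dd_add_left, dd_add_right, dd_cross]
  rw [Fin.ext_iff]
  simp only [fin2_val_add, fin2_val_ite]
  split_ifs <;> omega

/-! ### Generation: all `TH` lie in the OBC dynamical Lie algebra -/

lemma TH_mem_OBC (m n : Fin (2 * L)) (hmn : m < n) :
    TH L m n ∈ LieSubalgebra.lieSpan ℝ (Matrix (Fin L → Fin 2) (Fin L → Fin 2) ℂ)
      (depGenOBC L) := by
  have key : ∀ g : ℕ, ∀ m n : Fin (2 * L), n.val = m.val + g + 1 →
      TH L m n ∈ LieSubalgebra.lieSpan ℝ (Matrix (Fin L → Fin 2) (Fin L → Fin 2) ℂ)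
        (depGenOBC L) := by
    intro g
    induction g using Nat.strong_induction_on with
    | _ g ih =>
      intro m n hg
      rcases Nat.eq_zero_or_pos g with hg0 | hgpos
      · subst hg0
        rcases Nat.even_or_odd m.val with ⟨j, hj⟩ | ⟨j, hj⟩
        · -- m = 2j, n = 2j+1 : the generator i Z_j
          have hjL : j < L := by have := n.isLt; omega
          have h1 : 2 * (⟨j, hjL⟩ : Fin L).val < 2 * L := by simp; omega
          have h2 : 2 * (⟨j, hjL⟩ : Fin L).val + 1 < 2 * L := by simp; have := n.isLt; omega
          have hm : m = ⟨2 * (⟨j, hjL⟩ : Fin L).val, h1⟩ := Fin.ext (by simp; omega)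
          have hn : n = ⟨2 * (⟨j, hjL⟩ : Fin L).val + 1, h2⟩ := Fin.ext (by simp; omega)
          rw [hm, hn, genZ]
          apply LieSubalgebra.subset_lieSpan
          exact Or.inl ⟨⟨j, hjL⟩, rfl⟩
        · -- m = 2j+1, n = 2j+2 : the generator i X_j X_{j+1}
          have hjL : j + 1 < L := by have := n.isLt; omega
          have h1 : 2 * j + 1 < 2 * L := by omega
          have h2 : 2 * j + 2 < 2 * L := by omega
          have hm : m = ⟨2 * j + 1, h1⟩ := Fin.ext (by simp; omega)
          have hn : n = ⟨2 * j + 2, h2⟩ := Fin.ext (by simp; omega)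
          rw [hm, hn, genXX j hjL]
          apply LieSubalgebra.subset_lieSpan
          exact Or.inr ⟨j, hjL, rfl⟩
      · -- inductive step through the midpoint
        set x : Fin (2 * L) := ⟨m.val + g, by have := n.isLt; omega⟩ with hx
        have hxval : x.val = m.val + g := rfl
        have hmem1 : TH L m x ∈ _ := ih (g - 1) (by omega) m x (by omega)
        have hmem2 : TH L x n ∈ _ := ih 0 (by omega) x n (by omega)
        obtain ⟨c, hc, hc0⟩ := th_bracket (av m + av x) (bv m + bv x) (av x + av n) (bv x + bv n)
        rw [Vc1 av, Vc1 bv] at hc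
        have hc' : ⁅TH L m x, TH L x n⁆ = c • TH L m n := hc
        have hcne : c ≠ 0 := hc0 (omega_ne m x n (by omega) (by omega))
        have hTH : TH L m n = c⁻¹ • ⁅TH L m x, TH L x n⁆ := by
          rw [hc', smul_smul, inv_mul_cancel₀ hcne, one_smul]
        rw [hTH]
        exact Submodule.smul_mem _ _ ((LieSubalgebra.lieSpan ℝ _ (depGenOBC L)).lie_mem hmem1 hmem2)
  exact key (n.val - m.val - 1) m n (by have : m.val < n.val := hmn; omega)

/-! ### Bracket structure of the `TH` family -/

lemma TH_bracket_cases (m n r s : Fin (2 * L)) (hmn : m < n) (hrs : r < s) :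
    ⁅TH L m n, TH L r s⁆ = 0 ∨
      ∃ (x y : Fin (2 * L)) (c : ℝ), x < y ∧ ⁅TH L m n, TH L r s⁆ = c • TH L x y := by
  have mk : ∀ (x y : Fin (2 * L)) (c : ℝ), x ≠ y →
      ⁅TH L m n, TH L r s⁆ = c • TH L x y →
      ∃ (x y : Fin (2 * L)) (c : ℝ), x < y ∧ ⁅TH L m n, TH L r s⁆ = c • TH L x y := by
    intro x y c hxy h
    rcases lt_or_gt_of_ne hxy with h' | h'
    · exact ⟨x, y, c, h', h⟩
    · exact ⟨y, x, c, h', by rw [h, TH_symm]⟩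
  by_cases hmr : m = r
  · by_cases hns : n = s
    · subst hmr; subst hns
      left; exact lie_self _
    · subst hmr
      obtain ⟨c, hc, -⟩ := th_bracket (av m + av n) (bv m + bv n) (av m + av s) (bv m + bv s)
      rw [Vc2 av, Vc2 bv] at hc
      exact Or.inr (mk n s c hns hc)
  · by_cases hms : m = s
    · subst hms
      obtain ⟨c, hc, -⟩ := th_bracket (av m + av n) (bv m + bv n) (av r + av m) (bv r + bv m)
      rw [Vc3 av, Vc3 bv] at hc
      refine Or.inr (mk r n c (fun h => ?_) hc)
      subst h
      exact absurd hmn (not_lt_of_gt hrs)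
    · by_cases hnr : n = r
      · subst hnr
        obtain ⟨c, hc, -⟩ := th_bracket (av m + av n) (bv m + bv n) (av n + av s) (bv n + bv s)
        rw [Vc1 av, Vc1 bv] at hc
        refine Or.inr (mk m s c (fun h => ?_) hc)
        subst h
        exact absurd hmn (not_lt_of_gt hrs)
      · by_cases hns : n = s
        · subst hns
          obtain ⟨c, hc, -⟩ := th_bracket (av m + av n) (bv m + bv n) (av r + av n) (bv r + bv n)
          rw [Vc4 av, Vc4 bv] at hc
          exact Or.inr (mk m r c hmr hc)
        · -- disjoint supports: the bracket vanishes
          left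
          apply th_bracket_zero
          exact omega_eq m n r s (fun h => hmr (Fin.ext h)) (fun h => hms (Fin.ext h))
            (fun h => hnr (Fin.ext h)) (fun h => hns (Fin.ext h))
            (Nat.ne_of_lt hmn) (Nat.ne_of_lt hrs)

/-! ### Commutation with parity and the sector projector -/

lemma PM_comm_parity (a b : Fin L → Fin 2) (h : dd a (1 : Fin L → Fin 2) = 0) :
    PM a b * parity L = parity L * PM a b := by
  rw [parity_eq, PM_mul, PM_mul, chi_zero_right, chi_eq_eps_dd, h, add_zero, zero_add,
    add_comm b 1]
  rfl

lemma TH_comm_parity (m n : Fin (2 * L)) : TH L m n * parity L = parity L * TH L m n := by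
  rw [TH, th, Matrix.smul_mul, Matrix.mul_smul, PM_comm_parity]
  rw [dd_add_left, dd_av_one, dd_av_one]
  rfl

lemma parity_sq (L : ℕ) : parity L * parity L = 1 := by
  rw [parity_eq, PM_mul, chi_zero_right, one_smul, add_zero]
  rw [show ((1 : Fin L → Fin 2) + 1) = 0 from funext fun k => fin2_add_self _]
  exact PM_one

lemma comm_sector {s : ℂ} {H : Matrix (Fin L → Fin 2) (Fin L → Fin 2) ℂ}
    (h : H * parity L = parity L * H) :
    H * paritySector L s = paritySector L s * H := by
  rw [paritySector, Matrix.mul_smul, Matrix.smul_mul, mul_add, add_mul, mul_one, one_mul,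
    Matrix.mul_smul, Matrix.smul_mul, h]

lemma sector_idem (L : ℕ) {s : ℂ} (hs : s = 1 ∨ s = -1) :
    paritySector L s * paritySector L s = paritySector L s := by
  have hss : s * s = 1 := by rcases hs with h | h <;> rw [h] <;> norm_num
  rw [paritySector, Matrix.smul_mul, Matrix.mul_smul, smul_smul]
  have hA : ((1 : Matrix (Fin L → Fin 2) (Fin L → Fin 2) ℂ) + s • parity L) *
      ((1 : Matrix (Fin L → Fin 2) (Fin L → Fin 2) ℂ) + s • parity L)
      = (2 : ℂ) • ((1 : Matrix (Fin L → Fin 2) (Fin L → Fin 2) ℂ) + s • parity L) := by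
    simp only [mul_add, add_mul, one_mul, mul_one, Matrix.smul_mul, Matrix.mul_smul,
      smul_smul, hss, parity_sq, one_smul, two_smul]
    abel
  rw [hA, smul_smul]
  norm_num

lemma compress_eq {s : ℂ} (hs : s = 1 ∨ s = -1) {H : Matrix (Fin L → Fin 2) (Fin L → Fin 2) ℂ}
    (h : H * parity L = parity L * H) :
    paritySector L s * H * paritySector L s = H * paritySector L s := by
  rw [← comm_sector h, mul_assoc, sector_idem L hs]

lemma mul_sector_mul {s : ℂ} (hs : s = 1 ∨ s = -1)
    {A B : Matrix (Fin L → Fin 2) (Fin L → Fin 2) ℂ}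
    (hB : B * parity L = parity L * B) :
    (A * paritySector L s) * (B * paritySector L s) = (A * B) * paritySector L s := by
  have hBs := comm_sector (s := s) hB
  calc (A * paritySector L s) * (B * paritySector L s)
      = A * (paritySector L s * (B * paritySector L s)) := by rw [mul_assoc]
    _ = A * ((paritySector L s * B) * paritySector L s) := by rw [mul_assoc]
    _ = A * ((B * paritySector L s) * paritySector L s) := by rw [hBs]
    _ = A * (B * (paritySector L s * paritySector L s)) := by rw [mul_assoc]
    _ = A * (B * paritySector L s) := by rw [sector_idem L hs]
    _ = (A * B) * paritySector L s := by rw [← mul_assoc]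

lemma compress_bracket {s : ℂ} (hs : s = 1 ∨ s = -1)
    {H K : Matrix (Fin L → Fin 2) (Fin L → Fin 2) ℂ}
    (hH : H * parity L = parity L * H) (hK : K * parity L = parity L * K) :
    ⁅H * paritySector L s, K * paritySector L s⁆ = ⁅H, K⁆ * paritySector L s := by
  rw [Ring.lie_def, Ring.lie_def, mul_sector_mul hs hK, mul_sector_mul hs hH, sub_mul]

/-! ### Combinatorial injectivity lemmas -/

lemma pair_inj_aux {m n r s : Fin (2 * L)} (hmn : m < n) (hrs : r < s)
    (hA : av m + av n = av r + av s) (hB : bv m + bv n = bv r + bv s)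
    (hgt : s.val < n.val) : False := by
  have hnlt := n.isLt
  have hmn' : m.val < n.val := hmn
  have hrs' : r.val < s.val := hrs
  have hA' := congrFun hA ⟨n.val / 2, by omega⟩
  have hB' := congrFun hB ⟨n.val / 2, by omega⟩
  simp only [Pi.add_apply, av_apply, bv_apply, Fin.ext_iff, fin2_val_add, fin2_val_ite] at hA' hB'
  split_ifs at hA' hB' <;> omega

lemma pair_inj {m n r s : Fin (2 * L)} (hmn : m < n) (hrs : r < s)
    (hA : av m + av n = av r + av s) (hB : bv m + bv n = bv r + bv s) :
    m = r ∧ n = s := by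
  have hns : n = s := by
    rcases lt_trichotomy n.val s.val with h | h | h
    · exact absurd (pair_inj_aux hrs hmn hA.symm hB.symm h) (fun x => x)
    · exact Fin.ext h
    · exact absurd (pair_inj_aux hmn hrs hA hB h) (fun x => x)
  subst hns
  have hAm : av m = av r := by
    have := hA
    exact add_right_cancel this
  have hBm : bv m = bv r := add_right_cancel hB
  refine ⟨?_, rfl⟩
  have hmlt := m.isLt
  have hA' := congrFun hAm ⟨m.val / 2, by omega⟩
  have hB' := congrFun hBm ⟨m.val / 2, by omega⟩
  simp only [av_apply, bv_apply, Fin.ext_iff, fin2_val_ite] at hA' hB'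
  apply Fin.ext
  split_ifs at hA' hB' <;> omega

lemma pair_disj_core (hL3 : 3 ≤ L) {m n r s : Fin (2 * L)} (hmn : m < n) (hrs : r < s)
    (hA : av m + av n = av r + av s) (hB : bv m + bv n = bv r + bv s + 1)
    (hm0 : m.val = 0) (hr0 : r.val ≠ 0) : False := by
  have hnlt := n.isLt
  have hslt := s.isLt
  have hrlt := r.isLt
  have hmn' : m.val < n.val := hmn
  have hrs' : r.val < s.val := hrs
  have htop : (n.val = 2 * L - 1 ∧ s.val ≠ 2 * L - 1) ∨
      (s.val = 2 * L - 1 ∧ n.val ≠ 2 * L - 1) := by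
    have hc := congrFun hB ⟨L - 1, by omega⟩
    simp only [Pi.add_apply, bv_apply, Pi.one_apply, Fin.ext_iff, fin2_val_add,
      fin2_val_ite] at hc
    split_ifs at hc <;> omega
  rcases htop with ⟨hn1, hs1⟩ | ⟨hs1, hn1⟩
  · -- n = 2L-1
    have f1 : r.val % 2 = 1 := by
      have hc := congrFun hB ⟨r.val / 2, by omega⟩
      simp only [Pi.add_apply, bv_apply, Pi.one_apply, Fin.ext_iff, fin2_val_add,
        fin2_val_ite] at hc
      split_ifs at hc <;> omega
    have f2 : s.val = r.val + 1 := by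
      have hc := congrFun hB ⟨(r.val + 1) / 2, by omega⟩
      simp only [Pi.add_apply, bv_apply, Pi.one_apply, Fin.ext_iff, fin2_val_add,
        fin2_val_ite] at hc
      split_ifs at hc <;> omega
    have f3 : r.val = 1 := by
      have hc := congrFun hA ⟨0, by omega⟩
      simp only [Pi.add_apply, av_apply, Fin.ext_iff, fin2_val_add, fin2_val_ite] at hc
      split_ifs at hc <;> omega
    have hc := congrFun hA ⟨1, by omega⟩
    simp only [Pi.add_apply, av_apply, Fin.ext_iff, fin2_val_add, fin2_val_ite] at hc
    split_ifs at hc <;> omega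
  · -- s = 2L-1
    by_cases hnr : n.val = r.val
    · have hnr' : n = r := Fin.ext hnr
      subst hnr'
      rw [add_comm (av n) (av s)] at hA
      have hms : av m = av s := add_right_cancel hA
      have hc := congrFun hms ⟨0, by omega⟩
      simp only [av_apply, Fin.ext_iff, fin2_val_ite] at hc
      split_ifs at hc <;> omega
    · rcases lt_or_gt_of_ne hnr with hx | hx
      · -- n < r
        have f1 : n.val % 2 = 1 := by
          have hc := congrFun hB ⟨n.val / 2, by omega⟩
          simp only [Pi.add_apply, bv_apply, Pi.one_apply, Fin.ext_iff, fin2_val_add,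
            fin2_val_ite] at hc
          split_ifs at hc <;> omega
        have f2 : r.val = n.val + 1 := by
          have hc := congrFun hB ⟨(n.val + 1) / 2, by omega⟩
          simp only [Pi.add_apply, bv_apply, Pi.one_apply, Fin.ext_iff, fin2_val_add,
            fin2_val_ite] at hc
          split_ifs at hc <;> omega
        have f3 : n.val = 1 := by
          have hc := congrFun hA ⟨0, by omega⟩
          simp only [Pi.add_apply, av_apply, Fin.ext_iff, fin2_val_add, fin2_val_ite] at hc
          split_ifs at hc <;> omega
        have hc := congrFun hA ⟨L - 1, by omega⟩
        simp only [Pi.add_apply, av_apply, Fin.ext_iff, fin2_val_add, fin2_val_ite] at hc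
        split_ifs at hc <;> omega
      · -- r < n
        have f1 : r.val % 2 = 1 := by
          have hc := congrFun hB ⟨r.val / 2, by omega⟩
          simp only [Pi.add_apply, bv_apply, Pi.one_apply, Fin.ext_iff, fin2_val_add,
            fin2_val_ite] at hc
          split_ifs at hc <;> omega
        have f2 : n.val = r.val + 1 := by
          have hc := congrFun hB ⟨(r.val + 1) / 2, by omega⟩
          simp only [Pi.add_apply, bv_apply, Pi.one_apply, Fin.ext_iff, fin2_val_add,
            fin2_val_ite] at hc
          split_ifs at hc <;> omega
        have f3 : r.val = 1 := by
          have hc := congrFun hA ⟨0, by omega⟩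
          simp only [Pi.add_apply, av_apply, Fin.ext_iff, fin2_val_add, fin2_val_ite] at hc
          split_ifs at hc <;> omega
        have hc := congrFun hA ⟨L - 1, by omega⟩
        simp only [Pi.add_apply, av_apply, Fin.ext_iff, fin2_val_add, fin2_val_ite] at hc
        split_ifs at hc <;> omega

lemma one_add_one_V (L : ℕ) : (1 : Fin L → Fin 2) + 1 = 0 := by
  funext k
  simp only [Pi.add_apply, Pi.one_apply, Pi.zero_apply]
  exact fin2_add_self 1

lemma pair_disj (hL : 3 ≤ L) {m n r s : Fin (2 * L)} (hmn : m < n) (hrs : r < s)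
    (hA : av m + av n = av r + av s) (hB : bv m + bv n = bv r + bv s + 1) :
    False := by
  have hnlt := n.isLt
  have hslt := s.isLt
  have hmn' : m.val < n.val := hmn
  have hrs' : r.val < s.val := hrs
  have hz : (m.val = 0 ∧ r.val ≠ 0) ∨ (r.val = 0 ∧ m.val ≠ 0) := by
    have hc := congrFun hB ⟨0, by omega⟩
    simp only [Pi.add_apply, bv_apply, Pi.one_apply, Fin.ext_iff, fin2_val_add,
      fin2_val_ite] at hc
    split_ifs at hc <;> omega
  rcases hz with ⟨h1, h2⟩ | ⟨h1, h2⟩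
  · exact pair_disj_core hL hmn hrs hA hB h1 h2
  · refine pair_disj_core hL hrs hmn hA.symm ?_ h1 h2
    rw [hB, add_assoc, one_add_one_V, add_zero]

/-! ### The compressed PBC generator -/

lemma gen_compress_aux {s : ℂ} (hs : s = 1 ∨ s = -1) (a : Fin L → Fin 2) :
    (Complex.I • PM a 0) * paritySector L s
      = s • ((Complex.I • PM a 1) * paritySector L s) := by
  rw [paritySector, parity_eq]
  have e1 : PM a 0 * ((1 : Matrix (Fin L → Fin 2) (Fin L → Fin 2) ℂ) + s • PM 0 1)
      = PM a 0 + s • PM a 1 := by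
    rw [mul_add, mul_one, Matrix.mul_smul, PM_mul, chi_zero_right, one_smul, add_zero, zero_add]
  have e2 : PM a 1 * ((1 : Matrix (Fin L → Fin 2) (Fin L → Fin 2) ℂ) + s • PM 0 1)
      = PM a 1 + s • PM a 0 := by
    rw [mul_add, mul_one, Matrix.mul_smul, PM_mul]
    rw [show chi (1 : Fin L → Fin 2) (0 : Fin L → Fin 2) = 1 from chi_zero_right 1, one_smul,
      add_zero, one_add_one_V]
  rw [Matrix.smul_mul, Matrix.mul_smul, e1, Matrix.smul_mul, Matrix.mul_smul, e2]
  rcases hs with rfl | rfl <;> module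

lemma extra_gen_compress (hL : 3 ≤ L) {s : ℂ} (hs : s = 1 ∨ s = -1)
    (h1 : (0 : ℕ) < 2 * L) (h2 : 2 * L - 1 < 2 * L) :
    (Complex.I • (site L PX ⟨L - 1, by omega⟩ * site L PX ⟨0, Nat.lt_of_lt_of_le (by norm_num) hL⟩)) * paritySector L s
      = s • (TH L ⟨0, h1⟩ ⟨2 * L - 1, h2⟩ * paritySector L s) := by
  have hav : av (⟨0, h1⟩ : Fin (2 * L)) + av ⟨2 * L - 1, h2⟩
      = dlt (⟨L - 1, by omega⟩ : Fin L) + dlt ⟨0, Nat.lt_of_lt_of_le (by norm_num) hL⟩ := by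
    funext k
    simp only [Pi.add_apply, av_apply, dlt, Fin.ext_iff]
    split_ifs <;> first | rfl | omega
  have hbv : bv (⟨0, h1⟩ : Fin (2 * L)) + bv ⟨2 * L - 1, h2⟩ = (1 : Fin L → Fin 2) := by
    funext k
    have hk := k.isLt
    simp only [Pi.add_apply, bv_apply, Pi.one_apply]
    split_ifs <;> first | rfl | omega
  have hdd : dd (dlt (⟨L - 1, by omega⟩ : Fin L) + dlt ⟨0, Nat.lt_of_lt_of_le (by norm_num) hL⟩) (1 : Fin L → Fin 2)
      = 0 := by
    rw [← hav, dd_add_left, dd_av_one, dd_av_one]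
    rfl
  have hTH : TH L ⟨0, h1⟩ ⟨2 * L - 1, h2⟩
      = Complex.I • PM (dlt (⟨L - 1, by omega⟩ : Fin L) + dlt ⟨0, Nat.lt_of_lt_of_le (by norm_num) hL⟩) 1 := by
    rw [TH, hav, hbv, th, hdd]
    norm_num
  have hx : site L PX (⟨L - 1, by omega⟩ : Fin L) * site L PX ⟨0, Nat.lt_of_lt_of_le (by norm_num) hL⟩
      = PM (dlt (⟨L - 1, by omega⟩ : Fin L) + dlt ⟨0, Nat.lt_of_lt_of_le (by norm_num) hL⟩) 0 := by
    rw [site_PX, site_PX, PM_mul, chi_zero_left, one_smul, add_zero]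
  rw [hx, hTH]
  exact gen_compress_aux hs _


/-! ### The compressed family and its span -/

variable (L) in
/-- index type: ordered pairs of Majorana labels -/
abbrev JJ := {x : Fin (2 * L) × Fin (2 * L) // x.1 < x.2}

/-- the compressed basis elements -/
def uu (L : ℕ) (s : ℂ) (t : JJ L) : Matrix (Fin L → Fin 2) (Fin L → Fin 2) ℂ :=
  paritySector L s * TH L t.1.1 t.1.2 * paritySector L s

/-- the compressed dynamical Lie algebra, as a real span -/
def WW (L : ℕ) (s : ℂ) : Submodule ℝ (Matrix (Fin L → Fin 2) (Fin L → Fin 2) ℂ) :=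
  Submodule.span ℝ (Set.range (uu L s))

lemma uu_eq {s : ℂ} (hs : s = 1 ∨ s = -1) (t : JJ L) :
    uu L s t = TH L t.1.1 t.1.2 * paritySector L s :=
  compress_eq hs (TH_comm_parity _ _)

lemma uu_bracket_mem {s : ℂ} (hs : s = 1 ∨ s = -1) (t t' : JJ L) :
    ⁅uu L s t, uu L s t'⁆ ∈ WW L s := by
  rw [uu_eq hs, uu_eq hs, compress_bracket hs (TH_comm_parity _ _) (TH_comm_parity _ _)]
  rcases TH_bracket_cases t.1.1 t.1.2 t'.1.1 t'.1.2 t.2 t'.2 with h0 | ⟨x, y, c, hxy, h⟩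
  · rw [h0, zero_mul]; exact (WW L s).zero_mem
  · rw [h, Matrix.smul_mul]
    refine (WW L s).smul_mem c (Submodule.subset_span ⟨⟨(x, y), hxy⟩, ?_⟩)
    exact uu_eq hs ⟨(x, y), hxy⟩

lemma WW_lie_closed {s : ℂ} (hs : s = 1 ∨ s = -1)
    (x y : Matrix (Fin L → Fin 2) (Fin L → Fin 2) ℂ)
    (hx : x ∈ WW L s) (hy : y ∈ WW L s) : ⁅x, y⁆ ∈ WW L s := by
  induction hx using Submodule.span_induction with
  | mem a ha =>
    induction hy using Submodule.span_induction with
    | mem b hb =>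
      obtain ⟨t, rfl⟩ := ha
      obtain ⟨t', rfl⟩ := hb
      exact uu_bracket_mem hs t t'
    | zero => rw [lie_zero]; exact (WW L s).zero_mem
    | add b c hb hc ihb ihc => rw [lie_add]; exact (WW L s).add_mem ihb ihc
    | smul r b hb ih => rw [lie_smul]; exact (WW L s).smul_mem r ih
  | zero => rw [zero_lie]; exact (WW L s).zero_mem
  | add a b ha hb iha ihb => rw [add_lie]; exact (WW L s).add_mem iha ihb
  | smul r a ha ih => rw [smul_lie]; exact (WW L s).smul_mem r ih

lemma th_sector_expand (s : ℂ) (a b : Fin L → Fin 2) :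
    th a b * paritySector L s
      = (2⁻¹ * Complex.I ^ ((dd a b).val + 1)) • PM a b
        + (s * (2⁻¹ * Complex.I ^ ((dd a b).val + 1))) • PM a (b + 1) := by
  rw [th, paritySector, parity_eq]
  have e : PM a b * ((1 : Matrix (Fin L → Fin 2) (Fin L → Fin 2) ℂ) + s • PM 0 1)
      = PM a b + s • PM a (b + 1) := by
    rw [mul_add, mul_one, Matrix.mul_smul, PM_mul, chi_zero_right, one_smul, add_zero]
  rw [Matrix.smul_mul, Matrix.mul_smul, e]
  module

/-- the two labels of a compressed pair -/
def Aa (L : ℕ) (t : JJ L) : Fin L → Fin 2 := av t.1.1 + av t.1.2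
def Bb (L : ℕ) (t : JJ L) : Fin L → Fin 2 := bv t.1.1 + bv t.1.2
def ee (L : ℕ) (t : JJ L) : ℕ := (dd (Aa L t) (Bb L t)).val + 1

lemma uu_expand {s : ℂ} (hs : s = 1 ∨ s = -1) (t : JJ L) :
    uu L s t = (2⁻¹ * Complex.I ^ ee L t) • PM (Aa L t) (Bb L t)
      + (s * (2⁻¹ * Complex.I ^ ee L t)) • PM (Aa L t) (Bb L t + 1) := by
  rw [uu_eq hs t]
  exact th_sector_expand s (Aa L t) (Bb L t)

lemma Aa_Bb_inj {t t' : JJ L} (h1 : Aa L t = Aa L t') (h2 : Bb L t = Bb L t') : t = t' := by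
  obtain ⟨h3, h4⟩ := pair_inj t.2 t'.2 h1 h2
  exact Subtype.ext (Prod.ext h3 h4)

lemma Aa_Bb_disj (hL : 3 ≤ L) {t t' : JJ L} (h1 : Aa L t = Aa L t')
    (h2 : Bb L t = Bb L t' + 1) : False :=
  pair_disj hL t.2 t'.2 h1 h2

lemma uu_li (hL : 3 ≤ L) {s : ℂ} (hs : s = 1 ∨ s = -1) :
    LinearIndependent ℝ (uu L s) := by
  classical
  rw [Fintype.linearIndependent_iff]
  intro g hg t0
  have hcoef : ∀ ab : (Fin L → Fin 2) × (Fin L → Fin 2),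
      (∑ t : JJ L,
        ((if (Aa L t, Bb L t) = ab then ((g t : ℝ) : ℂ) * (2⁻¹ * Complex.I ^ ee L t) else 0)
          + (if (Aa L t, Bb L t + 1) = ab then
              ((g t : ℝ) : ℂ) * (s * (2⁻¹ * Complex.I ^ ee L t)) else 0))) = 0 := by
    have hg' : ∑ ab : (Fin L → Fin 2) × (Fin L → Fin 2),
        (∑ t : JJ L,
          ((if (Aa L t, Bb L t) = ab then ((g t : ℝ) : ℂ) * (2⁻¹ * Complex.I ^ ee L t) else 0)
            + (if (Aa L t, Bb L t + 1) = ab then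
                ((g t : ℝ) : ℂ) * (s * (2⁻¹ * Complex.I ^ ee L t)) else 0))) • PM ab.1 ab.2
          = 0 := by
      calc ∑ ab : (Fin L → Fin 2) × (Fin L → Fin 2),
          (∑ t : JJ L,
            ((if (Aa L t, Bb L t) = ab then ((g t : ℝ) : ℂ) * (2⁻¹ * Complex.I ^ ee L t) else 0)
              + (if (Aa L t, Bb L t + 1) = ab then
                  ((g t : ℝ) : ℂ) * (s * (2⁻¹ * Complex.I ^ ee L t)) else 0))) • PM ab.1 ab.2
          = ∑ ab : (Fin L → Fin 2) × (Fin L → Fin 2), ∑ t : JJ L,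
            ((if (Aa L t, Bb L t) = ab then ((g t : ℝ) : ℂ) * (2⁻¹ * Complex.I ^ ee L t) else 0)
                • PM ab.1 ab.2
              + (if (Aa L t, Bb L t + 1) = ab then
                  ((g t : ℝ) : ℂ) * (s * (2⁻¹ * Complex.I ^ ee L t)) else 0) • PM ab.1 ab.2) := by
            refine Finset.sum_congr rfl fun ab _ => ?_
            rw [Finset.sum_smul]
            exact Finset.sum_congr rfl fun t _ => add_smul _ _ _
        _ = ∑ t : JJ L, ∑ ab : (Fin L → Fin 2) × (Fin L → Fin 2),
            ((if (Aa L t, Bb L t) = ab then ((g t : ℝ) : ℂ) * (2⁻¹ * Complex.I ^ ee L t) else 0)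
                • PM ab.1 ab.2
              + (if (Aa L t, Bb L t + 1) = ab then
                  ((g t : ℝ) : ℂ) * (s * (2⁻¹ * Complex.I ^ ee L t)) else 0) • PM ab.1 ab.2) :=
            Finset.sum_comm
        _ = ∑ t : JJ L,
            ((((g t : ℝ) : ℂ) * (2⁻¹ * Complex.I ^ ee L t)) • PM (Aa L t) (Bb L t)
              + (((g t : ℝ) : ℂ) * (s * (2⁻¹ * Complex.I ^ ee L t)))
                  • PM (Aa L t) (Bb L t + 1)) := by
            refine Finset.sum_congr rfl fun t _ => ?_
            rw [Finset.sum_add_distrib]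
            congr 1
            · simp only [ite_smul, zero_smul]
              exact Finset.sum_ite_eq Finset.univ (Aa L t, Bb L t)
                (fun ab => (((g t : ℝ) : ℂ) * (2⁻¹ * Complex.I ^ ee L t)) • PM ab.1 ab.2)
                |>.trans (by simp)
            · simp only [ite_smul, zero_smul]
              exact Finset.sum_ite_eq Finset.univ (Aa L t, Bb L t + 1)
                (fun ab => (((g t : ℝ) : ℂ) * (s * (2⁻¹ * Complex.I ^ ee L t))) • PM ab.1 ab.2)
                |>.trans (by simp)
        _ = ∑ t : JJ L, g t • uu L s t := by
            refine Finset.sum_congr rfl fun t _ => ?_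
            rw [uu_expand hs t, smul_add, ← smul_assoc, ← smul_assoc, Complex.real_smul,
              Complex.real_smul]
        _ = 0 := hg
    intro ab
    exact Fintype.linearIndependent_iff.mp (PM_linearIndependent L) _ hg' ab
  have h0 := hcoef (Aa L t0, Bb L t0)
  have hsingle : ∑ t : JJ L,
      ((if (Aa L t, Bb L t) = (Aa L t0, Bb L t0) then
          ((g t : ℝ) : ℂ) * (2⁻¹ * Complex.I ^ ee L t) else 0)
        + (if (Aa L t, Bb L t + 1) = (Aa L t0, Bb L t0) then
            ((g t : ℝ) : ℂ) * (s * (2⁻¹ * Complex.I ^ ee L t)) else 0))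
      = ((g t0 : ℝ) : ℂ) * (2⁻¹ * Complex.I ^ ee L t0) := by
    rw [Finset.sum_eq_single t0]
    · rw [if_pos rfl, if_neg, add_zero]
      intro hcon
      rw [Prod.mk.injEq] at hcon
      exact Aa_Bb_disj hL hcon.1.symm hcon.2.symm
    · intro t _ htne
      rw [if_neg, if_neg, add_zero]
      · intro hcon
        rw [Prod.mk.injEq] at hcon
        exact Aa_Bb_disj hL hcon.1.symm hcon.2.symm
      · intro hcon
        rw [Prod.mk.injEq] at hcon
        exact htne (Aa_Bb_inj hcon.1 hcon.2)
    · intro h; exact absurd (Finset.mem_univ _) h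
  rw [hsingle] at h0
  have hI : (2⁻¹ * Complex.I ^ ee L t0 : ℂ) ≠ 0 :=
    mul_ne_zero (by norm_num) (pow_ne_zero _ Complex.I_ne_zero)
  have := (mul_eq_zero.mp h0).resolve_right hI
  exact_mod_cast this

lemma card_JJ (L : ℕ) : Fintype.card (JJ L) = L * (2 * L - 1) := by
  classical
  have h1 : Fintype.card (JJ L)
      = (Finset.univ.filter fun x : Fin (2 * L) × Fin (2 * L) => x.1 < x.2).card :=
    Fintype.card_subtype _
  have h2 : (Finset.univ.filter fun x : Fin (2 * L) × Fin (2 * L) => x.1 < x.2).card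
      = (Finset.univ.filter fun x : Fin (2 * L) × Fin (2 * L) => x.2 < x.1).card := by
    apply Finset.card_bij (fun x _ => (x.2, x.1))
    · intro a ha
      simp only [Finset.mem_filter, Finset.mem_univ, true_and] at ha ⊢
      exact ha
    · intro a _ b _ hab
      rw [Prod.mk.injEq] at hab
      exact Prod.ext hab.2 hab.1
    · intro b hb
      simp only [Finset.mem_filter, Finset.mem_univ, true_and] at hb
      exact ⟨(b.2, b.1), by simp [Finset.mem_filter, hb], rfl⟩
  have h3 : (Finset.univ.filter fun x : Fin (2 * L) × Fin (2 * L) => x.1 = x.2).card = 2 * L := by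
    have himg : (Finset.univ.filter fun x : Fin (2 * L) × Fin (2 * L) => x.1 = x.2)
        = Finset.univ.image (fun i : Fin (2 * L) => (i, i)) := by
      ext x
      simp only [Finset.mem_filter, Finset.mem_univ, true_and, Finset.mem_image]
      constructor
      · intro h; exact ⟨x.1, Prod.ext rfl h⟩
      · rintro ⟨i, rfl⟩; rfl
    rw [himg, Finset.card_image_of_injective _ (fun a b h => congrArg Prod.fst h),
      Finset.card_univ, Fintype.card_fin]
  have hunion : ((Finset.univ.filter fun x : Fin (2 * L) × Fin (2 * L) => x.1 < x.2)
      ∪ (Finset.univ.filter fun x : Fin (2 * L) × Fin (2 * L) => x.2 < x.1))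
      ∪ (Finset.univ.filter fun x : Fin (2 * L) × Fin (2 * L) => x.1 = x.2)
      = Finset.univ := by
    ext x
    simp only [Finset.mem_union, Finset.mem_filter, Finset.mem_univ, true_and, iff_true]
    rcases lt_trichotomy x.1 x.2 with h | h | h
    · exact Or.inl (Or.inl h)
    · exact Or.inr h
    · exact Or.inl (Or.inr h)
  have hd1 : Disjoint (Finset.univ.filter fun x : Fin (2 * L) × Fin (2 * L) => x.1 < x.2)
      (Finset.univ.filter fun x : Fin (2 * L) × Fin (2 * L) => x.2 < x.1) := by
    rw [Finset.disjoint_left]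
    intro a ha hb
    simp only [Finset.mem_filter, Finset.mem_univ, true_and] at ha hb
    exact absurd hb (not_lt_of_gt ha)
  have hd2 : Disjoint ((Finset.univ.filter fun x : Fin (2 * L) × Fin (2 * L) => x.1 < x.2)
      ∪ (Finset.univ.filter fun x : Fin (2 * L) × Fin (2 * L) => x.2 < x.1))
      (Finset.univ.filter fun x : Fin (2 * L) × Fin (2 * L) => x.1 = x.2) := by
    rw [Finset.disjoint_left]
    intro a ha hb
    simp only [Finset.mem_union, Finset.mem_filter, Finset.mem_univ, true_and] at ha hb
    rcases ha with h | h
    · exact absurd hb (ne_of_lt h)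
    · exact absurd hb.symm (ne_of_lt h)
  have hcard := congrArg Finset.card hunion
  rw [Finset.card_union_of_disjoint hd2, Finset.card_union_of_disjoint hd1, h3, h2] at hcard
  simp only [Finset.card_univ, Fintype.card_prod, Fintype.card_fin] at hcard
  rw [h1, h2]
  have hgoal : L * (2 * L - 1) + L = L * (2 * L) := by
    have h5 : 2 * L - 1 + 1 = 2 * L ∨ L = 0 := by omega
    rcases h5 with h5 | rfl
    · calc L * (2 * L - 1) + L = L * ((2 * L - 1) + 1) := by ring
        _ = L * (2 * L) := by rw [h5]
    · simp
  have hcard2 : 2 * L * (2 * L) = 2 * (L * (2 * L)) := by ring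
  rw [hcard2] at hcard
  generalize hX : L * (2 * L - 1) = X at hgoal ⊢
  generalize hQ : L * (2 * L) = Q at hgoal hcard
  omega

lemma finrank_WW (hL : 3 ≤ L) {s : ℂ} (hs : s = 1 ∨ s = -1) :
    Module.finrank ℝ (WW L s) = L * (2 * L - 1) :=
  (finrank_span_eq_card (uu_li hL hs)).trans (card_JJ L)


/-! ### The comparison Lie subalgebra -/

lemma dd_dlt (j : Fin L) (b : Fin L → Fin 2) : dd (dlt j) b = b j := by
  rw [dd, Finset.sum_eq_single j]
  · simp [dlt]
  · intro k _ hk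
    simp [dlt, hk]
  · intro h; exact absurd (Finset.mem_univ _) h

lemma mul_comm_parity {x y : Matrix (Fin L → Fin 2) (Fin L → Fin 2) ℂ}
    (hx : x * parity L = parity L * x) (hy : y * parity L = parity L * y) :
    (x * y) * parity L = parity L * (x * y) := by
  calc (x * y) * parity L = x * (y * parity L) := by rw [mul_assoc]
    _ = x * (parity L * y) := by rw [hy]
    _ = (x * parity L) * y := by rw [mul_assoc]
    _ = (parity L * x) * y := by rw [hx]
    _ = parity L * (x * y) := by rw [mul_assoc]

/-- the submodule of matrices commuting with parity whose compression lies in `WW` -/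
def CCsub (L : ℕ) (s : ℂ) : Submodule ℝ (Matrix (Fin L → Fin 2) (Fin L → Fin 2) ℂ) where
  carrier := {H | H * parity L = parity L * H ∧
    paritySector L s * H * paritySector L s ∈ WW L s}
  add_mem' := by
    rintro a b ⟨ha1, ha2⟩ ⟨hb1, hb2⟩
    refine ⟨by rw [add_mul, mul_add, ha1, hb1], ?_⟩
    rw [mul_add, add_mul]
    exact (WW L s).add_mem ha2 hb2
  zero_mem' := by
    refine ⟨by rw [zero_mul, mul_zero], ?_⟩
    rw [mul_zero, zero_mul]
    exact (WW L s).zero_mem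
  smul_mem' := by
    rintro c a ⟨ha1, ha2⟩
    refine ⟨by rw [smul_mul_assoc, mul_smul_comm, ha1], ?_⟩
    rw [mul_smul_comm, smul_mul_assoc]
    exact (WW L s).smul_mem c ha2

/-- the comparison Lie subalgebra -/
def CC (L : ℕ) (s : ℂ) (hs : s = 1 ∨ s = -1) :
    LieSubalgebra ℝ (Matrix (Fin L → Fin 2) (Fin L → Fin 2) ℂ) :=
  { CCsub L s with
    lie_mem' := by
      rintro a b ⟨ha1, ha2⟩ ⟨hb1, hb2⟩
      have hcomm : ⁅a, b⁆ * parity L = parity L * ⁅a, b⁆ := by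
        rw [Ring.lie_def, sub_mul, mul_sub, mul_comm_parity ha1 hb1, mul_comm_parity hb1 ha1]
      refine ⟨hcomm, ?_⟩
      rw [compress_eq hs hcomm, ← compress_bracket hs ha1 hb1, ← compress_eq hs ha1,
        ← compress_eq hs hb1]
      exact WW_lie_closed hs _ _ ha2 hb2 }

lemma mem_CC {L : ℕ} {s : ℂ} {hs : s = 1 ∨ s = -1}
    {H : Matrix (Fin L → Fin 2) (Fin L → Fin 2) ℂ} :
    H ∈ CC L s hs ↔ (H * parity L = parity L * H ∧
      paritySector L s * H * paritySector L s ∈ WW L s) := Iff.rfl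

lemma TH_mem_CC {s : ℂ} (hs : s = 1 ∨ s = -1) (m n : Fin (2 * L)) (h : m < n) :
    TH L m n ∈ CC L s hs := by
  rw [mem_CC]
  exact ⟨TH_comm_parity m n, Submodule.subset_span ⟨⟨(m, n), h⟩, rfl⟩⟩

lemma gen_mem_CC (hL : 3 ≤ L) {s : ℂ} (hs : s = 1 ∨ s = -1) (hL0 : 0 < L) :
    depGenPBC L hL0 ⊆ ↑(CC L s hs) := by
  rintro M (hM | hM)
  · rcases hM with ⟨j, rfl⟩ | ⟨j, hj, rfl⟩
    · -- i Z_j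
      have h1 : 2 * j.val < 2 * L := by have := j.isLt; omega
      have h2 : 2 * j.val + 1 < 2 * L := by have := j.isLt; omega
      rw [← genZ j h1 h2]
      exact TH_mem_CC hs _ _ (by simp [Fin.lt_def])
    · -- i X_j X_{j+1}
      have h1 : 2 * j + 1 < 2 * L := by omega
      have h2 : 2 * j + 2 < 2 * L := by omega
      rw [← genXX j hj h1 h2]
      exact TH_mem_CC hs _ _ (by simp [Fin.lt_def])
  · -- the extra PBC generator
    simp only [Set.mem_singleton_iff] at hM
    subst hM
    have h1 : (0 : ℕ) < 2 * L := by omega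
    have h2 : 2 * L - 1 < 2 * L := by omega
    have hx : site L PX (⟨L - 1, by omega⟩ : Fin L) * site L PX ⟨0, hL0⟩
        = PM (dlt (⟨L - 1, by omega⟩ : Fin L) + dlt ⟨0, hL0⟩) 0 := by
      rw [site_PX, site_PX, PM_mul, chi_zero_left, one_smul, add_zero]
    have hdd : dd (dlt (⟨L - 1, by omega⟩ : Fin L) + dlt (⟨0, hL0⟩ : Fin L))
        (1 : Fin L → Fin 2) = 0 := by
      rw [dd_add_left, dd_dlt, dd_dlt]
      rfl
    have hcommE : (Complex.I • (site L PX ⟨L - 1, by omega⟩ * site L PX ⟨0, hL0⟩)) * parity L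
        = parity L * (Complex.I • (site L PX ⟨L - 1, by omega⟩ * site L PX ⟨0, hL0⟩)) := by
      rw [Matrix.smul_mul, Matrix.mul_smul, hx, PM_comm_parity _ _ hdd]
    rw [SetLike.mem_coe, mem_CC]
    refine ⟨hcommE, ?_⟩
    rw [compress_eq hs hcommE, extra_gen_compress hL hs h1 h2]
    have hlt : (⟨0, h1⟩ : Fin (2 * L)) < ⟨2 * L - 1, h2⟩ := by simp [Fin.lt_def]; omega
    have hmem : TH L ⟨0, h1⟩ ⟨2 * L - 1, h2⟩ * paritySector L s ∈ WW L s := by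
      rw [← uu_eq hs ⟨(⟨0, h1⟩, ⟨2 * L - 1, h2⟩), hlt⟩]
      exact Submodule.subset_span ⟨_, rfl⟩
    rcases hs with rfl | rfl
    · rwa [one_smul]
    · rw [show ((-1 : ℂ) • (TH L ⟨0, h1⟩ ⟨2 * L - 1, h2⟩ * paritySector L (-1)))
        = -(TH L ⟨0, h1⟩ ⟨2 * L - 1, h2⟩ * paritySector L (-1)) from neg_one_smul ℂ _]
      exact (WW L (-1)).neg_mem hmem

/-- compression as a real-linear map -/
def phiL (L : ℕ) (s : ℂ) :
    Matrix (Fin L → Fin 2) (Fin L → Fin 2) ℂ →ₗ[ℝ] Matrix (Fin L → Fin 2) (Fin L → Fin 2) ℂ where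
  toFun := fun H => paritySector L s * H * paritySector L s
  map_add' := fun a b => by
    change paritySector L s * (a + b) * paritySector L s
      = paritySector L s * a * paritySector L s + paritySector L s * b * paritySector L s
    rw [mul_add, add_mul]
  map_smul' := fun c a => by
    change paritySector L s * (c • a) * paritySector L s
      = c • (paritySector L s * a * paritySector L s)
    rw [mul_smul_comm, smul_mul_assoc]

end DLAux

/-- For `L ≥ 3` and a sign `s ∈ {+1, -1}` with parity projector `Π = (Id + s·P)/2`, the
compressions `{Π·H·Π : H ∈ 𝔡_OBC}` and `{Π·H·Π : H ∈ 𝔡_PBC}` coincide, and this set is a real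
vector space of dimension `L·(2L-1)`. -/
theorem dep_parity_sector (L : ℕ) (hL : 3 ≤ L) (s : ℂ) (hs : s = 1 ∨ s = -1) :
    ((fun H => paritySector L s * H * paritySector L s) ''
        ↑(LieSubalgebra.lieSpan ℝ (Matrix (Fin L → Fin 2) (Fin L → Fin 2) ℂ) (depGenOBC L)) =
      (fun H => paritySector L s * H * paritySector L s) ''
        ↑(LieSubalgebra.lieSpan ℝ (Matrix (Fin L → Fin 2) (Fin L → Fin 2) ℂ)
          (depGenPBC L (by omega)))) ∧
    ∃ W : Submodule ℝ (Matrix (Fin L → Fin 2) (Fin L → Fin 2) ℂ),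
      (W : Set (Matrix (Fin L → Fin 2) (Fin L → Fin 2) ℂ)) =
        (fun H => paritySector L s * H * paritySector L s) ''
          ↑(LieSubalgebra.lieSpan ℝ (Matrix (Fin L → Fin 2) (Fin L → Fin 2) ℂ) (depGenOBC L)) ∧
      Module.finrank ℝ ↥W = L * (2 * L - 1) := by
  classical
  have hL0 : 0 < L := by omega
  have hPBC_le : LieSubalgebra.lieSpan ℝ (Matrix (Fin L → Fin 2) (Fin L → Fin 2) ℂ)
      (depGenPBC L hL0) ≤ DLAux.CC L s hs :=
    (LieSubalgebra.lieSpan_le).mpr (DLAux.gen_mem_CC hL hs hL0)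
  have hsub1 : (fun H => paritySector L s * H * paritySector L s) ''
      ↑(LieSubalgebra.lieSpan ℝ (Matrix (Fin L → Fin 2) (Fin L → Fin 2) ℂ) (depGenOBC L)) ⊆
      (fun H => paritySector L s * H * paritySector L s) ''
      ↑(LieSubalgebra.lieSpan ℝ (Matrix (Fin L → Fin 2) (Fin L → Fin 2) ℂ)
        (depGenPBC L hL0)) := by
    apply Set.image_mono
    intro x hx
    exact LieSubalgebra.lieSpan_mono Set.subset_union_left hx
  have hsub2 : (fun H => paritySector L s * H * paritySector L s) ''
      ↑(LieSubalgebra.lieSpan ℝ (Matrix (Fin L → Fin 2) (Fin L → Fin 2) ℂ)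
        (depGenPBC L hL0)) ⊆ ↑(DLAux.WW L s) := by
    rintro x ⟨H, hH, rfl⟩
    exact (hPBC_le hH).2
  have hsub3 : ↑(DLAux.WW L s) ⊆ (fun H => paritySector L s * H * paritySector L s) ''
      ↑(LieSubalgebra.lieSpan ℝ (Matrix (Fin L → Fin 2) (Fin L → Fin 2) ℂ) (depGenOBC L)) := by
    have hle : DLAux.WW L s ≤ Submodule.map (DLAux.phiL L s)
        (LieSubalgebra.lieSpan ℝ (Matrix (Fin L → Fin 2) (Fin L → Fin 2) ℂ)
          (depGenOBC L)).toSubmodule := by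
      apply Submodule.span_le.mpr
      rintro y ⟨t, rfl⟩
      exact ⟨DLAux.TH L t.1.1 t.1.2, DLAux.TH_mem_OBC _ _ t.2, rfl⟩
    intro x hx
    obtain ⟨H, hH, hfH⟩ := Submodule.mem_map.mp (hle hx)
    exact ⟨H, hH, hfH⟩
  refine ⟨Set.Subset.antisymm hsub1 (hsub2.trans hsub3), DLAux.WW L s,
    Set.Subset.antisymm hsub3 (hsub1.trans hsub2), DLAux.finrank_WW hL hs⟩
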